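/- Let p > 3 be a prime and K a finite field with p² elements. Fix δ ∈ K with δ ≠ 0 and δ^p = −δ, let s ∈ K satisfy s^p = s, set C₃(s) = 2(1 + sδ), and let E_{3,s} : y² = x³ − 3(2C₃(s) + 1)x + (C₃(s)² + 10C₃(s) − 2) over K. Then (3, 2(1 − sδ)) is an affine point of E_{3,s}(K), and it has order exactly 3 in the group E_{3,s}(K). -/

import Mathlib

open WeierstrassCurve.Affine

open Classical in
/-- `(3, 2(1 − sδ))` is an affine point of `E_{3,s}(K)` of order exactly `3`. -/
theorem degree3_three_torsion_point
    (p : ℕ) (hp : p.Prime) (hp3 : 3 < p)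
    (K : Type*) [Field K] [Fintype K] (hK : Fintype.card K = p ^ 2)
    (δ : K) (hδ : δ ≠ 0) (hδp : δ ^ p = -δ)
    (s : K) (hs : s ^ p = s)
    (W : WeierstrassCurve.Affine K)
    (hW : W = { a₁ := 0, a₂ := 0, a₃ := 0,
                a₄ := -3 * (2 * (2 * (1 + s * δ)) + 1),
                a₆ := (2 * (1 + s * δ)) ^ 2 + 10 * (2 * (1 + s * δ)) - 2 }) :
    ∃ h : W.Nonsingular 3 (2 * (1 - s * δ)),
      addOrderOf (WeierstrassCurve.Affine.Point.some _ _ h) = 3 := by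
  have ha₁ : W.a₁ = 0 := by rw [hW]
  have ha₂ : W.a₂ = 0 := by rw [hW]
  have ha₃ : W.a₃ = 0 := by rw [hW]
  have ha₄ : W.a₄ = -3 * (2 * (2 * (1 + s * δ)) + 1) := by rw [hW]
  have ha₆ : W.a₆ = (2 * (1 + s * δ)) ^ 2 + 10 * (2 * (1 + s * δ)) - 2 := by rw [hW]
  -- characteristic
  haveI hcharK : CharP K p := by
    obtain ⟨n, hrp, hcard⟩ := FiniteField.card K (ringChar K)
    have hd : ringChar K ∣ p ^ 2 := by
      rw [hK] at hcard; exact hcard ▸ dvd_pow_self _ n.ne_zero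
    have : ringChar K = p :=
      (Nat.prime_dvd_prime_iff_eq hrp hp).mp (hrp.dvd_of_dvd_pow hd)
    exact this ▸ ringChar.charP K
  have h2 : (2 : K) ≠ 0 := by
    intro h
    have : p ∣ 2 := (CharP.cast_eq_zero_iff K p 2).mp (by exact_mod_cast h)
    exact absurd (Nat.le_of_dvd (by norm_num) this) (by omega)
  have hsd : (1 : K) - s * δ ≠ 0 := by
    intro h
    have h1 : s * δ = 1 := by linear_combination -h
    have e1 : (s * δ) ^ p = -(s * δ) := by rw [mul_pow, hs, hδp]; ring
    rw [h1, one_pow] at e1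
    exact h2 (by linear_combination e1)
  set y : K := 2 * (1 - s * δ) with hy
  have hyne : y ≠ W.negY 3 y := by
    rw [negY, ha₁, ha₃]
    intro h
    apply mul_ne_zero (mul_ne_zero h2 h2) hsd
    linear_combination h
  have heq : W.Equation 3 y := by
    rw [equation_iff, ha₁, ha₂, ha₃, ha₄, ha₆, hy]
    ring
  have h : W.Nonsingular 3 y := (W.nonsingular_iff 3 y).mpr ⟨heq, Or.inr hyne⟩
  refine ⟨h, ?_⟩
  have hyne2 : y - W.negY 3 y ≠ 0 := sub_ne_zero.mpr hyne
  have hslope : W.slope 3 3 y y = 3 := by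
    rw [slope_of_Y_ne rfl hyne]
    rw [div_eq_iff hyne2, negY, ha₁, ha₂, ha₃, ha₄, hy]
    ring
  have hx' : W.addX 3 3 (W.slope 3 3 y y) = 3 := by
    rw [hslope, addX, ha₁, ha₂]; ring
  have hy' : W.addY 3 3 y (W.slope 3 3 y y) = W.negY 3 y := by
    rw [hslope, addY, negAddY, addX, negY, negY, ha₁, ha₂, ha₃]; ring
  have hP2 : Point.some _ _ h + Point.some _ _ h
      = Point.some _ _ (nonsingular_add h h fun hxy => hyne hxy.right) :=
    Point.add_self_of_Y_ne hyne
  have hP3 : Point.some _ _ (nonsingular_add h h fun hxy => hyne hxy.right) + Point.some _ _ h = 0 :=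
    Point.add_of_Y_eq hx' hy'
  haveI : Fact (Nat.Prime 3) := ⟨by norm_num⟩
  refine addOrderOf_eq_prime ?_ (Point.some_ne_zero h)
  have : (3 : ℕ) • Point.some _ _ h
      = Point.some _ _ h + Point.some _ _ h + Point.some _ _ h := by
    rw [show (3 : ℕ) = 2 + 1 from rfl, add_nsmul, two_nsmul, one_nsmul]
  rw [this, hP2, hP3]
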